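/- Let τ : (0,B) → (0,∞) be continuous and let β be an antiderivative of 1/τ on (0,B). Then the function H(s) := exp(β(s)) is differentiable with derivative h(s) := H(s)/τ(s) > 0, and the transform T_H(s) := H(s)/h(s) equals τ(s) for all s ∈ (0,B). Hence every positive continuous function on (0,B) arises as the transform T_H of some admissible pair (H,h). -/

import Mathlib

/-- Every positive continuous function `τ` on `(0,B)` arises as the transform
`T_H = H/h` of an admissible pair `(H,h)`: taking `β` an antiderivative of `1/τ`
and `H = exp ∘ β`, the function `H` has derivative `h(s) = H(s)/τ(s) > 0` and
`H(s)/h(s) = τ(s)` on `(0,B)`. -/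
theorem stmt_1 (B : EReal) (hB : 0 < B) (τ β : ℝ → ℝ)
    (S : Set ℝ) (hS : S = {s : ℝ | 0 < s ∧ (s : EReal) < B})
    (hτc : ContinuousOn τ S) (hτpos : ∀ s ∈ S, 0 < τ s)
    (hβ : ∀ s ∈ S, HasDerivAt β (1 / τ s) s) :
    (∀ s ∈ S,
      HasDerivAt (fun t => Real.exp (β t)) (Real.exp (β s) / τ s) s ∧
      0 < Real.exp (β s) / τ s ∧
      Real.exp (β s) / (Real.exp (β s) / τ s) = τ s) ∧
    ∃ H h : ℝ → ℝ, (∀ s ∈ S, HasDerivAt H (h s) s) ∧ (∀ s ∈ S, 0 < h s) ∧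
      ContinuousOn h S ∧ ∀ s ∈ S, H s / h s = τ s := by
  have key : ∀ s ∈ S,
      HasDerivAt (fun t => Real.exp (β t)) (Real.exp (β s) / τ s) s ∧
      0 < Real.exp (β s) / τ s ∧
      Real.exp (β s) / (Real.exp (β s) / τ s) = τ s := by
    intro s hs
    have hτ := hτpos s hs
    have hd : HasDerivAt (fun t => Real.exp (β t)) (Real.exp (β s) * (1 / τ s)) s :=
      (Real.hasDerivAt_exp (β s)).comp s (hβ s hs)
    refine ⟨by rwa [mul_one_div] at hd, by positivity, ?_⟩
    field_simp
  refine ⟨key, fun t => Real.exp (β t), fun t => Real.exp (β t) / τ t,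
    fun s hs => (key s hs).1, fun s hs => (key s hs).2.1, ?_, fun s hs => (key s hs).2.2⟩
  have hβc : ContinuousOn β S := fun s hs => ((hβ s hs).continuousAt).continuousWithinAt
  exact (Real.continuous_exp.comp_continuousOn hβc).div hτc
    (fun s hs => (hτpos s hs).ne')
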